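/- (Multiplication formula for the RQFT.) Let f, g ∈ L¹(ℝ²,ℍ), let h := αg, H := ℱ_r h and F := ℱ_r f. Then ∫_{ℝ²} F(x₁,x₂) g(x₁,x₂) dx₁ dx₂ = ∫_{ℝ²} f(x₁,x₂) H(x₁,x₂) dx₁ dx₂. Moreover, if in addition g ∈ L²(ℝ²,ℍ), then ‖g‖₂ = ‖h‖₂. -/

import Mathlib

open MeasureTheory Real ENNReal

noncomputable section

/-- The real quaternions. -/
abbrev Hq := Quaternion ℝ

/-- The imaginary unit `i`. -/
def qi : Hq := ⟨0,1,0,0⟩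
/-- The imaginary unit `j`. -/
def qj : Hq := ⟨0,0,1,0⟩
/-- The imaginary unit `k`. -/
def qk : Hq := ⟨0,0,0,1⟩

/-- For a (unit pure imaginary) quaternion `u`, `e^{uθ} := cos θ + u sin θ`. -/
def qexp (u : Hq) (θ : ℝ) : Hq := (Real.cos θ) • (1 : Hq) + (Real.sin θ) • u

/-- The right-sided quaternion Fourier transform of `f ∈ L¹(ℝ²,ℍ)`. -/
def Fr (f : ℝ × ℝ → Hq) (ω : ℝ × ℝ) : Hq :=
  (1 / (2 * Real.pi)) • ∫ x : ℝ × ℝ, f x * qexp qi (-(ω.1 * x.1)) * qexp qj (-(ω.2 * x.2))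

/-- The two-sided quaternion Fourier transform of `f ∈ L¹(ℝ²,ℍ)`. -/
def Fs (f : ℝ × ℝ → Hq) (ω : ℝ × ℝ) : Hq :=
  (1 / (2 * Real.pi)) • ∫ x : ℝ × ℝ, qexp qi (-(ω.1 * x.1)) * f x * qexp qj (-(ω.2 * x.2))


/-- The transform alpha. -/
def alphaT (f : ℝ × ℝ → Hq) (x : ℝ × ℝ) : Hq :=
  ⟨(f x).re, (f (x.1, -x.2)).imI, (f (-x.1, x.2)).imJ, (f (-x.1, -x.2)).imK⟩

/-! ### Auxiliary material -/

@[simp] lemma qi_re : qi.re = 0 := rfl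
@[simp] lemma qi_imI : qi.imI = 1 := rfl
@[simp] lemma qi_imJ : qi.imJ = 0 := rfl
@[simp] lemma qi_imK : qi.imK = 0 := rfl
@[simp] lemma qj_re : qj.re = 0 := rfl
@[simp] lemma qj_imI : qj.imI = 0 := rfl
@[simp] lemma qj_imJ : qj.imJ = 1 := rfl
@[simp] lemma qj_imK : qj.imK = 0 := rfl
@[simp] lemma qk_re : qk.re = 0 := rfl
@[simp] lemma qk_imI : qk.imI = 0 := rfl
@[simp] lemma qk_imJ : qk.imJ = 0 := rfl
@[simp] lemma qk_imK : qk.imK = 1 := rfl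
@[simp] lemma alphaT_re (f : ℝ × ℝ → Hq) (x : ℝ × ℝ) : (alphaT f x).re = (f x).re := rfl
@[simp] lemma alphaT_imI (f : ℝ × ℝ → Hq) (x : ℝ × ℝ) :
    (alphaT f x).imI = (f (x.1, -x.2)).imI := rfl
@[simp] lemma alphaT_imJ (f : ℝ × ℝ → Hq) (x : ℝ × ℝ) :
    (alphaT f x).imJ = (f (-x.1, x.2)).imJ := rfl
@[simp] lemma alphaT_imK (f : ℝ × ℝ → Hq) (x : ℝ × ℝ) :
    (alphaT f x).imK = (f (-x.1, -x.2)).imK := rfl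
@[simp] lemma hone_re : (1:Hq).re = 1 := rfl
@[simp] lemma hone_imI : (1:Hq).imI = 0 := rfl
@[simp] lemma hone_imJ : (1:Hq).imJ = 0 := rfl
@[simp] lemma hone_imK : (1:Hq).imK = 0 := rfl

/-- The kernel of the right-sided QFT. -/
def Ee (ω x : ℝ × ℝ) : Hq := qexp qi (-(ω.1 * x.1)) * qexp qj (-(ω.2 * x.2))

lemma Ee_symm (ω x : ℝ × ℝ) : Ee ω x = Ee x ω := by
  simp [Ee, mul_comm]

lemma norm_one_of_normSq {q : Hq} (h : Quaternion.normSq q = 1) : ‖q‖ = 1 := by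
  have h2 := Quaternion.normSq_eq_norm_mul_self q
  nlinarith [norm_nonneg q]

lemma norm_qexp_qi (θ : ℝ) : ‖qexp qi θ‖ = 1 :=
  norm_one_of_normSq (by simp [Quaternion.normSq_def', qexp])

lemma norm_qexp_qj (θ : ℝ) : ‖qexp qj θ‖ = 1 :=
  norm_one_of_normSq (by simp [Quaternion.normSq_def', qexp])

lemma norm_qi : ‖qi‖ = 1 := norm_one_of_normSq (by simp [Quaternion.normSq_def'])
lemma norm_qj : ‖qj‖ = 1 := norm_one_of_normSq (by simp [Quaternion.normSq_def'])
lemma norm_qk : ‖qk‖ = 1 := norm_one_of_normSq (by simp [Quaternion.normSq_def'])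

lemma norm_Ee (ω x : ℝ × ℝ) : ‖Ee ω x‖ = 1 := by
  rw [Ee, norm_mul, norm_qexp_qi, norm_qexp_qj, mul_one]

lemma normSq_expand (q : Hq) :
    Quaternion.normSq q = q.re^2 + q.imI^2 + q.imJ^2 + q.imK^2 := by
  rw [Quaternion.normSq_def']

lemma abs_re_le (q : Hq) : |q.re| ≤ ‖q‖ := by
  have h2 := Quaternion.normSq_eq_norm_mul_self q
  have h3 := normSq_expand q
  nlinarith [norm_nonneg q, sq_abs q.re, abs_nonneg q.re]

lemma abs_imI_le (q : Hq) : |q.imI| ≤ ‖q‖ := by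
  have h2 := Quaternion.normSq_eq_norm_mul_self q
  have h3 := normSq_expand q
  nlinarith [norm_nonneg q, sq_abs q.imI, abs_nonneg q.imI]

lemma abs_imJ_le (q : Hq) : |q.imJ| ≤ ‖q‖ := by
  have h2 := Quaternion.normSq_eq_norm_mul_self q
  have h3 := normSq_expand q
  nlinarith [norm_nonneg q, sq_abs q.imJ, abs_nonneg q.imJ]

lemma abs_imK_le (q : Hq) : |q.imK| ≤ ‖q‖ := by
  have h2 := Quaternion.normSq_eq_norm_mul_self q
  have h3 := normSq_expand q
  nlinarith [norm_nonneg q, sq_abs q.imK, abs_nonneg q.imK]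

lemma cont_qexp (u : Hq) : Continuous (qexp u) :=
  (Real.continuous_cos.smul continuous_const).add (Real.continuous_sin.smul continuous_const)

lemma cont_Ee : Continuous fun z : (ℝ×ℝ)×(ℝ×ℝ) => Ee z.1 z.2 := by
  unfold Ee
  exact ((cont_qexp qi).comp (by fun_prop)).mul ((cont_qexp qj).comp (by fun_prop))

lemma cont_Ee_right (ω : ℝ × ℝ) : Continuous (Ee ω) := by
  show Continuous fun x : ℝ×ℝ => qexp qi (-(ω.1 * x.1)) * qexp qj (-(ω.2 * x.2))
  exact ((cont_qexp qi).comp (by fun_prop)).mul ((cont_qexp qj).comp (by fun_prop))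

lemma cont_Ee_comp (ω : ℝ × ℝ) {σ : ℝ×ℝ → ℝ×ℝ} (hσ : Continuous σ) :
    Continuous fun x => Ee ω (σ x) :=
  (cont_Ee_right ω).comp hσ

/-! ### Measure-preserving reflections -/

def mR : ℝ ≃ᵐ ℝ := (Homeomorph.neg ℝ).toMeasurableEquiv
def σ1 : (ℝ×ℝ) ≃ᵐ (ℝ×ℝ) := (MeasurableEquiv.refl ℝ).prodCongr mR
def σ2 : (ℝ×ℝ) ≃ᵐ (ℝ×ℝ) := mR.prodCongr (MeasurableEquiv.refl ℝ)
def σ3 : (ℝ×ℝ) ≃ᵐ (ℝ×ℝ) := mR.prodCongr mR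

lemma mp1 : MeasurePreserving (fun x : ℝ×ℝ => (x.1, -x.2)) volume volume :=
  (MeasurePreserving.id (volume : Measure ℝ)).prod
    (Measure.measurePreserving_neg (volume : Measure ℝ))

lemma mp2 : MeasurePreserving (fun x : ℝ×ℝ => (-x.1, x.2)) volume volume :=
  (Measure.measurePreserving_neg (volume : Measure ℝ)).prod
    (MeasurePreserving.id (volume : Measure ℝ))

lemma mp3 : MeasurePreserving (fun x : ℝ×ℝ => (-x.1, -x.2)) volume volume :=
  (Measure.measurePreserving_neg (volume : Measure ℝ)).prod
    (Measure.measurePreserving_neg (volume : Measure ℝ))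

lemma int1 (F : ℝ×ℝ → Hq) : ∫ x : ℝ×ℝ, F (x.1, -x.2) = ∫ x, F x :=
  mp1.integral_comp σ1.measurableEmbedding F

lemma int2 (F : ℝ×ℝ → Hq) : ∫ x : ℝ×ℝ, F (-x.1, x.2) = ∫ x, F x :=
  mp2.integral_comp σ2.measurableEmbedding F

lemma int3 (F : ℝ×ℝ → Hq) : ∫ x : ℝ×ℝ, F (-x.1, -x.2) = ∫ x, F x :=
  mp3.integral_comp σ3.measurableEmbedding F

lemma intg1 {F : ℝ×ℝ → Hq} (h : Integrable F) : Integrable fun x : ℝ×ℝ => F (x.1,-x.2) :=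
  (mp1.integrable_comp_emb σ1.measurableEmbedding).2 h

lemma intg2 {F : ℝ×ℝ → Hq} (h : Integrable F) : Integrable fun x : ℝ×ℝ => F (-x.1,x.2) :=
  (mp2.integrable_comp_emb σ2.measurableEmbedding).2 h

lemma intg3 {F : ℝ×ℝ → Hq} (h : Integrable F) : Integrable fun x : ℝ×ℝ => F (-x.1,-x.2) :=
  (mp3.integrable_comp_emb σ3.measurableEmbedding).2 h

lemma lint1 {F : ℝ×ℝ → ℝ≥0∞} (hF : AEMeasurable F volume) :
    ∫⁻ x : ℝ×ℝ, F (x.1,-x.2) = ∫⁻ x, F x := by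
  have h := lintegral_map' (μ := (volume : Measure (ℝ×ℝ)))
    (g := fun x : ℝ×ℝ => (x.1,-x.2)) (f := F) (by rwa [mp1.map_eq]) mp1.aemeasurable
  rw [mp1.map_eq] at h
  exact h.symm

lemma lint2 {F : ℝ×ℝ → ℝ≥0∞} (hF : AEMeasurable F volume) :
    ∫⁻ x : ℝ×ℝ, F (-x.1,x.2) = ∫⁻ x, F x := by
  have h := lintegral_map' (μ := (volume : Measure (ℝ×ℝ)))
    (g := fun x : ℝ×ℝ => (-x.1,x.2)) (f := F) (by rwa [mp2.map_eq]) mp2.aemeasurable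
  rw [mp2.map_eq] at h
  exact h.symm

lemma lint3 {F : ℝ×ℝ → ℝ≥0∞} (hF : AEMeasurable F volume) :
    ∫⁻ x : ℝ×ℝ, F (-x.1,-x.2) = ∫⁻ x, F x := by
  have h := lintegral_map' (μ := (volume : Measure (ℝ×ℝ)))
    (g := fun x : ℝ×ℝ => (-x.1,-x.2)) (f := F) (by rwa [mp3.map_eq]) mp3.aemeasurable
  rw [mp3.map_eq] at h
  exact h.symm

/-! ### Integrability helpers -/

lemma integrable_smul_unit {c : ℝ×ℝ → ℝ} {b : ℝ×ℝ → ℝ} (hb : Integrable b)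
    (hc : AEStronglyMeasurable c volume) (hcb : ∀ x, |c x| ≤ b x)
    {h : ℝ×ℝ → Hq} (hh : Continuous h) (hn : ∀ x, ‖h x‖ = 1) :
    Integrable fun x => c x • h x := by
  refine hb.mono' (hc.smul hh.aestronglyMeasurable) ?_
  filter_upwards with x
  rw [norm_smul, hn, mul_one, Real.norm_eq_abs]
  exact hcb x

lemma integral_mul_const {F : ℝ×ℝ → Hq} (hF : Integrable F) (c : Hq) :
    ∫ x, F x * c = (∫ x, F x) * c := by
  have := ((ContinuousLinearMap.mul ℝ Hq).flip c).integral_comp_comm hF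
  simpa using this

lemma integral_const_mul' {F : ℝ×ℝ → Hq} (hF : Integrable F) (c : Hq) :
    ∫ x, c * F x = c * ∫ x, F x := by
  have := (ContinuousLinearMap.mul ℝ Hq c).integral_comp_comm hF
  simpa using this

lemma integrable_mul_Ee {f : ℝ×ℝ → Hq} (hf : Integrable f) (ω : ℝ×ℝ) :
    Integrable fun y => f y * Ee ω y := by
  refine hf.norm.mono' (hf.aestronglyMeasurable.mul (cont_Ee_right ω).aestronglyMeasurable) ?_
  filter_upwards with y
  rw [norm_mul, norm_Ee, mul_one]

lemma integrable_Ee_mul {g : ℝ×ℝ → Hq} (hg : Integrable g) (ω : ℝ×ℝ) :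
    Integrable fun x => Ee ω x * g x := by
  refine hg.norm.mono' ((cont_Ee_right ω).aestronglyMeasurable.mul hg.aestronglyMeasurable) ?_
  filter_upwards with x
  rw [norm_mul, norm_Ee, one_mul]

lemma integral_add4 {a b c d : ℝ×ℝ → Hq} (ha : Integrable a) (hb : Integrable b)
    (hc : Integrable c) (hd : Integrable d) :
    ∫ x, (a x + b x + c x + d x) = (∫ x, a x) + (∫ x, b x) + (∫ x, c x) + (∫ x, d x) := by
  have hab : Integrable (fun x => a x + b x) := ha.add hb
  have habc : Integrable (fun x => a x + b x + c x) := hab.add hc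
  rw [integral_add habc hd, integral_add hab hc, integral_add ha hb]

lemma lintegral_add4 {a b c d : ℝ×ℝ → ℝ≥0∞} (ha : AEMeasurable a volume)
    (hb : AEMeasurable b volume) (hc : AEMeasurable c volume) :
    ∫⁻ x, (a x + b x + c x + d x) = (∫⁻ x, a x) + (∫⁻ x, b x) + (∫⁻ x, c x) + (∫⁻ x, d x) := by
  have hab : AEMeasurable (fun x => a x + b x) volume := ha.add hb
  have habc : AEMeasurable (fun x => a x + b x + c x) volume := hab.add hc
  rw [lintegral_add_left' habc d, lintegral_add_left' hab c, lintegral_add_left' ha b]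

/-! ### The key pointwise identities -/

lemma identity1 (g : ℝ×ℝ → Hq) (ω x : ℝ×ℝ) :
    Ee ω x * g x = (g x).re • ((1:Hq) * Ee ω x)
      + (g x).imI • (qi * Ee ω (x.1,-x.2))
      + (g x).imJ • (qj * Ee ω (-x.1,x.2))
      + (g x).imK • (qk * Ee ω (-x.1,-x.2)) := by
  ext <;>
    simp [Ee, qexp, neg_mul, mul_neg, neg_neg, Real.cos_neg, Real.sin_neg] <;>
    ring

lemma identity2 (g : ℝ×ℝ → Hq) (ω x : ℝ×ℝ) :
    alphaT g x * Ee ω x = (g x).re • ((1:Hq) * Ee ω x)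
      + (g (x.1,-x.2)).imI • (qi * Ee ω x)
      + (g (-x.1,x.2)).imJ • (qj * Ee ω x)
      + (g (-x.1,-x.2)).imK • (qk * Ee ω x) := by
  ext <;>
    simp [Ee, qexp, neg_mul, mul_neg, neg_neg,
      Real.cos_neg, Real.sin_neg] <;>
    ring

/-! ### The key integral identity -/

lemma keyA {g : ℝ×ℝ → Hq} (hg : Integrable g) (ω : ℝ×ℝ) :
    ∫ x, Ee ω x * g x = ∫ x, alphaT g x * Ee ω x := by
  have hg1 := intg1 hg
  have hg2 := intg2 hg
  have hg3 := intg3 hg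
  -- integrability of the four pieces, in both forms
  have A0 : Integrable fun x : ℝ×ℝ => (g x).re • ((1:Hq) * Ee ω x) :=
    integrable_smul_unit hg.norm
      (Quaternion.continuous_re.comp_aestronglyMeasurable hg.aestronglyMeasurable)
      (fun x => abs_re_le (g x))
      (continuous_const.mul (cont_Ee_right ω))
      (fun x => by rw [one_mul, norm_Ee])
  have A1' : Integrable fun x : ℝ×ℝ => (g x).imI • (qi * Ee ω (x.1,-x.2)) :=
    integrable_smul_unit hg.norm
      (Quaternion.continuous_imI.comp_aestronglyMeasurable hg.aestronglyMeasurable)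
      (fun x => abs_imI_le (g x))
      (continuous_const.mul (cont_Ee_comp ω (by fun_prop)))
      (fun x => by rw [norm_mul, norm_qi, norm_Ee, mul_one])
  have A2' : Integrable fun x : ℝ×ℝ => (g x).imJ • (qj * Ee ω (-x.1,x.2)) :=
    integrable_smul_unit hg.norm
      (Quaternion.continuous_imJ.comp_aestronglyMeasurable hg.aestronglyMeasurable)
      (fun x => abs_imJ_le (g x))
      (continuous_const.mul (cont_Ee_comp ω (by fun_prop)))
      (fun x => by rw [norm_mul, norm_qj, norm_Ee, mul_one])
  have A3' : Integrable fun x : ℝ×ℝ => (g x).imK • (qk * Ee ω (-x.1,-x.2)) :=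
    integrable_smul_unit hg.norm
      (Quaternion.continuous_imK.comp_aestronglyMeasurable hg.aestronglyMeasurable)
      (fun x => abs_imK_le (g x))
      (continuous_const.mul (cont_Ee_comp ω (by fun_prop)))
      (fun x => by rw [norm_mul, norm_qk, norm_Ee, mul_one])
  have A1 : Integrable fun x : ℝ×ℝ => (g (x.1,-x.2)).imI • (qi * Ee ω x) :=
    integrable_smul_unit hg1.norm
      (Quaternion.continuous_imI.comp_aestronglyMeasurable hg1.aestronglyMeasurable)
      (fun x => abs_imI_le (g (x.1,-x.2)))
      (continuous_const.mul (cont_Ee_right ω))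
      (fun x => by rw [norm_mul, norm_qi, norm_Ee, mul_one])
  have A2 : Integrable fun x : ℝ×ℝ => (g (-x.1,x.2)).imJ • (qj * Ee ω x) :=
    integrable_smul_unit hg2.norm
      (Quaternion.continuous_imJ.comp_aestronglyMeasurable hg2.aestronglyMeasurable)
      (fun x => abs_imJ_le (g (-x.1,x.2)))
      (continuous_const.mul (cont_Ee_right ω))
      (fun x => by rw [norm_mul, norm_qj, norm_Ee, mul_one])
  have A3 : Integrable fun x : ℝ×ℝ => (g (-x.1,-x.2)).imK • (qk * Ee ω x) :=
    integrable_smul_unit hg3.norm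
      (Quaternion.continuous_imK.comp_aestronglyMeasurable hg3.aestronglyMeasurable)
      (fun x => abs_imK_le (g (-x.1,-x.2)))
      (continuous_const.mul (cont_Ee_right ω))
      (fun x => by rw [norm_mul, norm_qk, norm_Ee, mul_one])
  -- the change-of-variables for the three reflected pieces
  have i1 : (∫ x : ℝ×ℝ, (g x).imI • (qi * Ee ω (x.1,-x.2)))
      = ∫ x : ℝ×ℝ, (g (x.1,-x.2)).imI • (qi * Ee ω x) := by
    have h := int1 (fun y : ℝ×ℝ => (g (y.1,-y.2)).imI • (qi * Ee ω y))
    simpa using h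
  have i2 : (∫ x : ℝ×ℝ, (g x).imJ • (qj * Ee ω (-x.1,x.2)))
      = ∫ x : ℝ×ℝ, (g (-x.1,x.2)).imJ • (qj * Ee ω x) := by
    have h := int2 (fun y : ℝ×ℝ => (g (-y.1,y.2)).imJ • (qj * Ee ω y))
    simpa using h
  have i3 : (∫ x : ℝ×ℝ, (g x).imK • (qk * Ee ω (-x.1,-x.2)))
      = ∫ x : ℝ×ℝ, (g (-x.1,-x.2)).imK • (qk * Ee ω x) := by
    have h := int3 (fun y : ℝ×ℝ => (g (-y.1,-y.2)).imK • (qk * Ee ω y))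
    simpa using h
  calc ∫ x, Ee ω x * g x
      = ∫ x : ℝ×ℝ, ((g x).re • ((1:Hq) * Ee ω x)
          + (g x).imI • (qi * Ee ω (x.1,-x.2))
          + (g x).imJ • (qj * Ee ω (-x.1,x.2))
          + (g x).imK • (qk * Ee ω (-x.1,-x.2))) := by
        exact integral_congr_ae (Filter.Eventually.of_forall fun x => identity1 g ω x)
    _ = (∫ x : ℝ×ℝ, (g x).re • ((1:Hq) * Ee ω x))
        + (∫ x : ℝ×ℝ, (g x).imI • (qi * Ee ω (x.1,-x.2)))
        + (∫ x : ℝ×ℝ, (g x).imJ • (qj * Ee ω (-x.1,x.2)))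
        + (∫ x : ℝ×ℝ, (g x).imK • (qk * Ee ω (-x.1,-x.2))) := by
        exact integral_add4 A0 A1' A2' A3'
    _ = (∫ x : ℝ×ℝ, (g x).re • ((1:Hq) * Ee ω x))
        + (∫ x : ℝ×ℝ, (g (x.1,-x.2)).imI • (qi * Ee ω x))
        + (∫ x : ℝ×ℝ, (g (-x.1,x.2)).imJ • (qj * Ee ω x))
        + (∫ x : ℝ×ℝ, (g (-x.1,-x.2)).imK • (qk * Ee ω x)) := by
        rw [i1, i2, i3]
    _ = ∫ x : ℝ×ℝ, ((g x).re • ((1:Hq) * Ee ω x)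
          + (g (x.1,-x.2)).imI • (qi * Ee ω x)
          + (g (-x.1,x.2)).imJ • (qj * Ee ω x)
          + (g (-x.1,-x.2)).imK • (qk * Ee ω x)) := by
        exact (integral_add4 A0 A1 A2 A3).symm
    _ = ∫ x, alphaT g x * Ee ω x := by
        exact (integral_congr_ae (Filter.Eventually.of_forall fun x => identity2 g ω x)).symm

lemma Fr_eq (f : ℝ×ℝ → Hq) (ω : ℝ×ℝ) :
    Fr f ω = (1 / (2 * Real.pi)) • ∫ y, f y * Ee ω y := by
  simp only [Fr, Ee, mul_assoc]

/-! ### The main theorem -/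

theorem stmt5 (f g : ℝ × ℝ → Hq) (hf : Integrable f) (hg : Integrable g) :
    (∫ x : ℝ × ℝ, Fr f x * g x) = (∫ x : ℝ × ℝ, f x * Fr (alphaT g) x) ∧
      (MemLp g 2 volume → eLpNorm g 2 volume = eLpNorm (alphaT g) 2 volume) := by
  constructor
  · -- the multiplication formula
    have hprod : Integrable (fun z : (ℝ×ℝ)×(ℝ×ℝ) => f z.2 * Ee z.1 z.2 * g z.1)
        ((volume : Measure (ℝ×ℝ)).prod (volume : Measure (ℝ×ℝ))) := by
      have hm : AEStronglyMeasurable (fun z : (ℝ×ℝ)×(ℝ×ℝ) => f z.2 * Ee z.1 z.2 * g z.1)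
          ((volume : Measure (ℝ×ℝ)).prod (volume : Measure (ℝ×ℝ))) :=
        ((hf.aestronglyMeasurable.comp_snd).mul cont_Ee.aestronglyMeasurable).mul
          hg.aestronglyMeasurable.comp_fst
      refine (hg.norm.mul_prod hf.norm).mono' hm ?_
      filter_upwards with z
      rw [norm_mul, norm_mul, norm_Ee]
      exact le_of_eq (by ring)
    calc ∫ x : ℝ×ℝ, Fr f x * g x
        = ∫ x : ℝ×ℝ, (1 / (2 * Real.pi)) • ((∫ y, f y * Ee x y) * g x) := by
          refine integral_congr_ae (Filter.Eventually.of_forall fun x => ?_)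
          simp only []
          rw [Fr_eq, smul_mul_assoc]
      _ = (1 / (2 * Real.pi)) • ∫ x : ℝ×ℝ, (∫ y, f y * Ee x y) * g x := by
          rw [integral_smul]
      _ = (1 / (2 * Real.pi)) • ∫ x : ℝ×ℝ, ∫ y, f y * Ee x y * g x := by
          congr 1
          refine integral_congr_ae (Filter.Eventually.of_forall fun x => ?_)
          simp only []
          rw [← integral_mul_const (integrable_mul_Ee hf x) (g x)]
      _ = (1 / (2 * Real.pi)) • ∫ y : ℝ×ℝ, ∫ x, f y * Ee x y * g x := by
          congr 1
          exact integral_integral_swap hprod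
      _ = (1 / (2 * Real.pi)) • ∫ y : ℝ×ℝ, ∫ x, f y * Ee y x * g x := by
          congr 1
          refine integral_congr_ae (Filter.Eventually.of_forall fun y => ?_)
          simp only []
          refine integral_congr_ae (Filter.Eventually.of_forall fun x => ?_)
          simp only []
          rw [Ee_symm x y]
      _ = (1 / (2 * Real.pi)) • ∫ y : ℝ×ℝ, f y * ∫ x, Ee y x * g x := by
          congr 1
          refine integral_congr_ae (Filter.Eventually.of_forall fun y => ?_)
          simp only [mul_assoc]
          exact integral_const_mul' (integrable_Ee_mul hg y) (f y)
      _ = (1 / (2 * Real.pi)) • ∫ y : ℝ×ℝ, f y * ∫ x, alphaT g x * Ee y x := by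
          congr 1
          refine integral_congr_ae (Filter.Eventually.of_forall fun y => ?_)
          simp only []
          rw [keyA hg y]
      _ = ∫ x : ℝ×ℝ, f x * Fr (alphaT g) x := by
          rw [← integral_smul]
          refine integral_congr_ae (Filter.Eventually.of_forall fun x => ?_)
          simp only []
          rw [Fr_eq, mul_smul_comm]
  · -- the norm identity
    intro _
    have h2 : ∀ q : Hq, (‖q‖₊ : ℝ≥0∞) ^ (2:ℝ)
        = ENNReal.ofReal (q.re^2) + ENNReal.ofReal (q.imI^2)
          + ENNReal.ofReal (q.imJ^2) + ENNReal.ofReal (q.imK^2) := by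
      intro q
      have hn : ‖q‖^2 = q.re^2 + q.imI^2 + q.imJ^2 + q.imK^2 := by
        rw [sq, ← Quaternion.normSq_eq_norm_mul_self, normSq_expand]
      rw [← enorm_eq_nnnorm, ← ofReal_norm,
        ENNReal.ofReal_rpow_of_nonneg (norm_nonneg q) (by norm_num),
        show ((2:ℝ)) = ((2:ℕ):ℝ) by norm_num, Real.rpow_natCast, hn,
        ENNReal.ofReal_add (by positivity) (by positivity),
        ENNReal.ofReal_add (by positivity) (by positivity),
        ENNReal.ofReal_add (by positivity) (by positivity)]
    -- a.e.-measurability of the components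
    have m0 : AEMeasurable (fun x : ℝ×ℝ => ENNReal.ofReal ((g x).re^2)) volume :=
      ((ENNReal.continuous_ofReal.comp (continuous_pow 2)).comp_aestronglyMeasurable
        (Quaternion.continuous_re.comp_aestronglyMeasurable
          hg.aestronglyMeasurable)).aemeasurable
    have m1 : AEMeasurable (fun x : ℝ×ℝ => ENNReal.ofReal ((g x).imI^2)) volume :=
      ((ENNReal.continuous_ofReal.comp (continuous_pow 2)).comp_aestronglyMeasurable
        (Quaternion.continuous_imI.comp_aestronglyMeasurable
          hg.aestronglyMeasurable)).aemeasurable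
    have m2 : AEMeasurable (fun x : ℝ×ℝ => ENNReal.ofReal ((g x).imJ^2)) volume :=
      ((ENNReal.continuous_ofReal.comp (continuous_pow 2)).comp_aestronglyMeasurable
        (Quaternion.continuous_imJ.comp_aestronglyMeasurable
          hg.aestronglyMeasurable)).aemeasurable
    have m3 : AEMeasurable (fun x : ℝ×ℝ => ENNReal.ofReal ((g x).imK^2)) volume :=
      ((ENNReal.continuous_ofReal.comp (continuous_pow 2)).comp_aestronglyMeasurable
        (Quaternion.continuous_imK.comp_aestronglyMeasurable
          hg.aestronglyMeasurable)).aemeasurable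
    have m1' : AEMeasurable (fun x : ℝ×ℝ => ENNReal.ofReal ((g (x.1,-x.2)).imI^2)) volume :=
      ((ENNReal.continuous_ofReal.comp (continuous_pow 2)).comp_aestronglyMeasurable
        (Quaternion.continuous_imI.comp_aestronglyMeasurable
          (intg1 hg).aestronglyMeasurable)).aemeasurable
    have m2' : AEMeasurable (fun x : ℝ×ℝ => ENNReal.ofReal ((g (-x.1,x.2)).imJ^2)) volume :=
      ((ENNReal.continuous_ofReal.comp (continuous_pow 2)).comp_aestronglyMeasurable
        (Quaternion.continuous_imJ.comp_aestronglyMeasurable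
          (intg2 hg).aestronglyMeasurable)).aemeasurable
    have m3' : AEMeasurable (fun x : ℝ×ℝ => ENNReal.ofReal ((g (-x.1,-x.2)).imK^2)) volume :=
      ((ENNReal.continuous_ofReal.comp (continuous_pow 2)).comp_aestronglyMeasurable
        (Quaternion.continuous_imK.comp_aestronglyMeasurable
          (intg3 hg).aestronglyMeasurable)).aemeasurable
    have key : (∫⁻ x : ℝ×ℝ, (‖g x‖₊ : ℝ≥0∞) ^ (2:ℝ))
        = ∫⁻ x : ℝ×ℝ, (‖alphaT g x‖₊ : ℝ≥0∞) ^ (2:ℝ) := by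
      have l1 : (∫⁻ x : ℝ×ℝ, ENNReal.ofReal ((g x).imI^2))
          = ∫⁻ x : ℝ×ℝ, ENNReal.ofReal ((g (x.1,-x.2)).imI^2) := by
        have h := lint1 (F := fun y : ℝ×ℝ => ENNReal.ofReal ((g (y.1,-y.2)).imI^2)) m1'
        simpa using h
      have l2 : (∫⁻ x : ℝ×ℝ, ENNReal.ofReal ((g x).imJ^2))
          = ∫⁻ x : ℝ×ℝ, ENNReal.ofReal ((g (-x.1,x.2)).imJ^2) := by
        have h := lint2 (F := fun y : ℝ×ℝ => ENNReal.ofReal ((g (-y.1,y.2)).imJ^2)) m2'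
        simpa using h
      have l3 : (∫⁻ x : ℝ×ℝ, ENNReal.ofReal ((g x).imK^2))
          = ∫⁻ x : ℝ×ℝ, ENNReal.ofReal ((g (-x.1,-x.2)).imK^2) := by
        have h := lint3 (F := fun y : ℝ×ℝ => ENNReal.ofReal ((g (-y.1,-y.2)).imK^2)) m3'
        simpa using h
      calc (∫⁻ x : ℝ×ℝ, (‖g x‖₊ : ℝ≥0∞) ^ (2:ℝ))
          = ∫⁻ x : ℝ×ℝ, (ENNReal.ofReal ((g x).re^2) + ENNReal.ofReal ((g x).imI^2)
              + ENNReal.ofReal ((g x).imJ^2) + ENNReal.ofReal ((g x).imK^2)) := by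
            exact lintegral_congr fun x => h2 (g x)
        _ = (∫⁻ x : ℝ×ℝ, ENNReal.ofReal ((g x).re^2))
            + (∫⁻ x : ℝ×ℝ, ENNReal.ofReal ((g x).imI^2))
            + (∫⁻ x : ℝ×ℝ, ENNReal.ofReal ((g x).imJ^2))
            + (∫⁻ x : ℝ×ℝ, ENNReal.ofReal ((g x).imK^2)) := by
            exact lintegral_add4 m0 m1 m2
        _ = (∫⁻ x : ℝ×ℝ, ENNReal.ofReal ((g x).re^2))
            + (∫⁻ x : ℝ×ℝ, ENNReal.ofReal ((g (x.1,-x.2)).imI^2))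
            + (∫⁻ x : ℝ×ℝ, ENNReal.ofReal ((g (-x.1,x.2)).imJ^2))
            + (∫⁻ x : ℝ×ℝ, ENNReal.ofReal ((g (-x.1,-x.2)).imK^2)) := by
            rw [l1, l2, l3]
        _ = ∫⁻ x : ℝ×ℝ, (ENNReal.ofReal ((g x).re^2)
              + ENNReal.ofReal ((g (x.1,-x.2)).imI^2)
              + ENNReal.ofReal ((g (-x.1,x.2)).imJ^2)
              + ENNReal.ofReal ((g (-x.1,-x.2)).imK^2)) := by
            exact (lintegral_add4 m0 m1' m2').symm
        _ = ∫⁻ x : ℝ×ℝ, (‖alphaT g x‖₊ : ℝ≥0∞) ^ (2:ℝ) := by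
            refine (lintegral_congr fun x => ?_).symm
            rw [h2 (alphaT g x)]
            rfl
    rw [eLpNorm_eq_lintegral_rpow_enorm_toReal (by norm_num) (by norm_num),
      eLpNorm_eq_lintegral_rpow_enorm_toReal (by norm_num) (by norm_num)]
    simp only [ENNReal.toReal_ofNat]
    exact congrArg (· ^ (1/(2:ℝ))) key
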